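/- Let R be an integral domain of Krull dimension at most 1. Then every unimodular 2×2 matrix over R with nonzero determinant is simply extendable. -/

import Mathlib

/-- A 2×2 matrix over a commutative ring is *unimodular* if the ideal generated by
its entries is the whole ring, i.e. some linear combination of its entries is 1. -/
def MatUnimodular {R : Type*} [CommRing R] (A : Matrix (Fin 2) (Fin 2) R) : Prop :=
  ∃ p q r s : R, p * A 0 0 + q * A 0 1 + r * A 1 0 + s * A 1 1 = 1

/-- A 2×2 matrix `A` is *extendable* if there is a 3×3 matrix of determinant 1 whose
upper-left 2×2 block is `A`. -/
def Extendable {R : Type*} [CommRing R] (A : Matrix (Fin 2) (Fin 2) R) : Prop :=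
  ∃ B : Matrix (Fin 3) (Fin 3) R, B.det = 1 ∧
    ∀ i j : Fin 2, B i.castSucc j.castSucc = A i j

/-- A 2×2 matrix `A` is *simply extendable* if there is a 3×3 matrix of determinant 1
whose upper-left 2×2 block is `A` and whose (3,3) entry is 0. -/
def SimplyExtendable {R : Type*} [CommRing R] (A : Matrix (Fin 2) (Fin 2) R) : Prop :=
  ∃ B : Matrix (Fin 3) (Fin 3) R, B.det = 1 ∧
    (∀ i j : Fin 2, B i.castSucc j.castSucc = A i j) ∧ B 2 2 = 0

/-- A 2×2 matrix is *non-full* if it is a product of a 2×1 matrix and a 1×2 matrix. -/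
def NonFull {R : Type*} [CommRing R] (A : Matrix (Fin 2) (Fin 2) R) : Prop :=
  ∃ l m n q : R, A 0 0 = l * n ∧ A 0 1 = l * q ∧ A 1 0 = m * n ∧ A 1 1 = m * q

/-- Over an integral domain of Krull dimension at most 1, every unimodular 2×2
matrix with nonzero determinant is simply extendable. -/
lemma aux_zero_dim {R : Type*} [CommRing R] [IsDomain R]
    (hdim : ringKrullDim R ≤ 1) (δ : R) (hδ : δ ≠ 0) (x : R) :
    ∃ (m : ℕ) (t z : R), 1 ≤ m ∧ x ^ m = x ^ (m + 1) * t + δ * z := by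
  by_contra hcon
  push_neg at hcon
  -- the multiplicative set {x^n (1 + a x)}
  set S : Submonoid R :=
    { carrier := {r | ∃ (n : ℕ) (a : R), x ^ n * (1 + a * x) = r}
      one_mem' := ⟨0, 0, by ring⟩
      mul_mem' := by
        rintro r r' ⟨n, a, rfl⟩ ⟨n', a', rfl⟩
        exact ⟨n + n', a + a' + a * a' * x, by ring⟩ } with hS
  have hdisj : Disjoint ((Ideal.span {δ} : Ideal R) : Set R) (S : Set R) := by
    rw [Set.disjoint_left]
    rintro r hr ⟨n, a, ha⟩
    obtain ⟨c, hc⟩ := Ideal.mem_span_singleton'.mp hr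
    exact hcon (n + 1) (-a) (c * x) (Nat.le_add_left 1 n)
      (by linear_combination x * ha - x * hc)
  obtain ⟨p, hp, hδp, hpS⟩ := Ideal.exists_le_prime_disjoint (Ideal.span {δ}) S hdisj
  have hxS : x ∈ (S : Set R) := ⟨1, 0, by ring⟩
  have hxp : x ∉ p := fun h => Set.disjoint_left.mp hpS h hxS
  have hne : p ⊔ Ideal.span {x} ≠ ⊤ := by
    intro htop
    have h1 : (1 : R) ∈ p ⊔ Ideal.span {x} := htop ▸ Submodule.mem_top
    obtain ⟨u, hu, v, hv, huv⟩ := Submodule.mem_sup.mp h1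
    obtain ⟨a, ha⟩ := Ideal.mem_span_singleton'.mp hv
    have : (1 - a * x : R) ∈ p := by
      have : u = 1 - a * x := by linear_combination huv + ha
      rwa [← this]
    exact Set.disjoint_left.mp hpS this ⟨0, -a, by ring⟩
  obtain ⟨m, hm, hle⟩ := Ideal.exists_le_maximal _ hne
  -- build a chain ⊥ < p < m in the prime spectrum
  have hδ0 : δ ∈ p := hδp (Ideal.mem_span_singleton_self δ)
  have hbotp : (⊥ : Ideal R) < p := by
    refine lt_of_le_of_ne bot_le ?_
    intro h
    exact hδ (by simpa [← h] using hδ0)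
  have hpm : p < m := by
    refine lt_of_le_of_ne (le_trans le_sup_left hle) ?_
    intro h
    exact hxp (h ▸ hle (Submodule.mem_sup_right (Ideal.mem_span_singleton_self x)))
  let P0 : PrimeSpectrum R := ⟨⊥, Ideal.bot_prime⟩
  let P1 : PrimeSpectrum R := ⟨p, hp⟩
  let P2 : PrimeSpectrum R := ⟨m, hm.isPrime⟩
  have h01 : P0 < P1 := hbotp
  have h12 : P1 < P2 := hpm
  let c : LTSeries (PrimeSpectrum R) :=
    ⟨2, ![P0, P1, P2], by
      intro i
      fin_cases i
      · exact h01
      · exact h12⟩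
  have h2 := Order.LTSeries.length_le_krullDim c
  have : (2 : WithBot ℕ∞) ≤ ringKrullDim R := by
    simpa [c, ringKrullDim] using h2
  have : (2 : WithBot ℕ∞) ≤ 1 := this.trans hdim
  norm_num at this

theorem simplyExtendable_of_dim_le_one {R : Type*} [CommRing R] [IsDomain R]
    (hdim : ringKrullDim R ≤ 1) (A : Matrix (Fin 2) (Fin 2) R)
    (hA : MatUnimodular A) (hdet : A.det ≠ 0) : SimplyExtendable A := by
  obtain ⟨p, q, r, s, h1⟩ := hA
  set a := A 0 0; set b := A 0 1; set c := A 1 0; set d := A 1 1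
  set δ := A.det with hδdef
  have hδ : δ = a * d - b * c := by rw [hδdef, Matrix.det_fin_two]
  set x := p * a + r * c with hx
  set y := q * b + s * d with hy
  have hxy : x + y = 1 := by rw [hx, hy]; linear_combination h1
  obtain ⟨n, t, z, hn1, hnt⟩ := aux_zero_dim hdim δ hdet x
  -- x^n ≡ x^n (x t)^k mod δ, by induction on k
  have key : ∀ k : ℕ, ∃ w : R, x ^ n = x ^ n * (x * t) ^ k + δ * w := by
    intro k
    induction k with
    | zero => exact ⟨0, by ring⟩
    | succ k ih =>
      obtain ⟨w, hw⟩ := ih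
      refine ⟨z * (x * t) ^ k + w, ?_⟩
      have : x ^ n * (x * t) ^ k = (x ^ (n+1) * t + δ * z) * (x * t) ^ k := by rw [← hnt]
      calc x ^ n = x ^ n * (x * t) ^ k + δ * w := hw
    _ = x ^ n * (x * t) ^ (k + 1) + δ * (z * (x * t) ^ k + w) := by
          rw [this]; ring
  obtain ⟨w, hw⟩ := key n
  set e := (x * t) ^ n with he
  have hee : e = e * e + δ * (w * t ^ n) := by
    have h := congrArg (· * t ^ n) hw
    rw [he]
    calc (x * t) ^ n = x ^ n * t ^ n := by rw [mul_pow]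
      _ = (x ^ n * (x*t) ^ n + δ * w) * t ^ n := by rw [← hw]
      _ = (x*t)^n * ((x*t)^n) + δ * (w * t ^ n) := by rw [mul_pow]; ring
  set α := a * e + b * (1 - e) with hα
  set β := c * e + d * (1 - e) with hβ
  have hδJ : δ = (d - c) * α + (a - b) * β := by
    rw [hα, hβ, hδ]; ring
  have hspan : Ideal.span {α, β} = ⊤ := by
    by_contra hne
    obtain ⟨m, hm, hle⟩ := Ideal.exists_le_maximal _ hne
    have hαm : α ∈ m := hle (Ideal.subset_span (by simp))
    have hβm : β ∈ m := hle (Ideal.subset_span (by simp))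
    have hδm : δ ∈ m := hδJ ▸ m.add_mem (m.mul_mem_left _ hαm) (m.mul_mem_left _ hβm)
    have hprime := hm.isPrime
    by_cases hem : e ∈ m
    · -- then b, d ∈ m, x ∈ m, so 1 = x + y ∈ m
      have hxm : x ∈ m := by
        refine hprime.mem_of_pow_mem n ?_
        have : x ^ n = x ^ n * e + δ * w := by rw [he, ← hw]  -- careful
        rw [this]
        exact m.add_mem (m.mul_mem_left _ hem) (m.mul_mem_right _ hδm)
      have h1e : (1 - e) ∉ m := by
        intro h
        exact hm.ne_top (m.eq_top_of_isUnit_mem (by simpa using m.add_mem hem h) isUnit_one)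
      have hbm : b ∈ m := by
        have : b * (1 - e) ∈ m := by
          have : b * (1 - e) = α - a * e := by rw [hα]; ring
          rw [this]; exact m.sub_mem hαm (m.mul_mem_left _ hem)
        rcases hprime.mem_or_mem this with h | h
        · exact h
        · exact absurd h h1e
      have hdm : d ∈ m := by
        have : d * (1 - e) ∈ m := by
          have : d * (1 - e) = β - c * e := by rw [hβ]; ring
          rw [this]; exact m.sub_mem hβm (m.mul_mem_left _ hem)
        rcases hprime.mem_or_mem this with h | h
        · exact h
        · exact absurd h h1e
      have hym : y ∈ m := by
        rw [hy]; exact m.add_mem (m.mul_mem_left _ hbm) (m.mul_mem_left _ hdm)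
      have : (1 : R) ∈ m := by rw [← hxy]; exact m.add_mem hxm hym
      exact hm.ne_top (m.eq_top_of_isUnit_mem this isUnit_one)
    · -- e ∉ m : then 1 - e ∈ m, a, c ∈ m, so e ∈ m, contradiction
      have h1e : (1 - e) ∈ m := by
        have : e * (1 - e) ∈ m := by
          have : e * (1 - e) = δ * (w * t ^ n) := by linear_combination hee
          rw [this]; exact m.mul_mem_right _ hδm
        rcases hprime.mem_or_mem this with h | h
        · exact absurd h hem
        · exact h
      have ham : a ∈ m := by
        have : a * e ∈ m := by
          have : a * e = α - b * (1 - e) := by rw [hα]; ring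
          rw [this]; exact m.sub_mem hαm (m.mul_mem_left _ h1e)
        rcases hprime.mem_or_mem this with h | h
        · exact h
        · exact absurd h hem
      have hcm : c ∈ m := by
        have : c * e ∈ m := by
          have : c * e = β - d * (1 - e) := by rw [hβ]; ring
          rw [this]; exact m.sub_mem hβm (m.mul_mem_left _ h1e)
        rcases hprime.mem_or_mem this with h | h
        · exact h
        · exact absurd h hem
      have hxm : x ∈ m := by
        rw [hx]; exact m.add_mem (m.mul_mem_left _ ham) (m.mul_mem_left _ hcm)
      exact hem (by rw [he]; exact m.pow_mem_of_mem (m.mul_mem_right _ hxm) n hn1)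
  have h1mem : (1 : R) ∈ Ideal.span ({α, β} : Set R) := hspan ▸ Submodule.mem_top
  obtain ⟨u, v, huv⟩ := Ideal.mem_span_pair.mp h1mem
  refine ⟨!![a, b, v; c, d, -u; e - 1, e, 0], ?_, ?_, by simp⟩
  · rw [Matrix.det_fin_three]
    simp
    linear_combination huv
  · intro i j
    fin_cases i <;> fin_cases j <;> simp <;> rfl
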